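/- Let G be a graph and S,T disjoint vertex sets with G[S], G[T] connected and no edges between S and T. Suppose v ∈ N(S) is such that every path in G from v to a vertex of T intersects N(S) \ {v}, or no such path exists. Then no minimal ST-separator disjoint from S ∪ T contains v. -/

import Mathlib

open SimpleGraph

/-- `Z` is an `ST`-separator: `Z` is disjoint from `S ∪ T` and in `G − Z`
there is no path from a vertex of `S` to a vertex of `T`. -/
def IsSTSep {V : Type*} (G : SimpleGraph V) (S T Z : Set V) : Prop :=
  Disjoint Z (S ∪ T) ∧
    ∀ (a b : V) (ha : a ∈ Zᶜ) (hb : b ∈ Zᶜ), a ∈ S → b ∈ T →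
      ¬ (G.induce Zᶜ).Reachable ⟨a, ha⟩ ⟨b, hb⟩

/-- `Z` is a minimal `ST`-separator: no proper subset is an `ST`-separator. -/
def IsMinSTSep {V : Type*} (G : SimpleGraph V) (S T Z : Set V) : Prop :=
  IsSTSep G S T Z ∧ ∀ Z' ⊂ Z, ¬ IsSTSep G S T Z'

/-- Open neighborhood of a vertex set. -/
def setNbhd {V : Type*} (G : SimpleGraph V) (S : Set V) : Set V :=
  {v | v ∉ S ∧ ∃ u ∈ S, G.Adj u v}

private lemma reach_of_walk {V : Type*} {G : SimpleGraph V} {s : Set V} :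
    ∀ {a b : V} (p : G.Walk a b), (∀ x ∈ p.support, x ∈ s) →
      ∀ (ha : a ∈ s) (hb : b ∈ s), (G.induce s).Reachable ⟨a, ha⟩ ⟨b, hb⟩ := by
  intro a b p
  induction p with
  | nil => intro _ ha hb; exact Reachable.refl _
  | cons h p ih =>
    intro hs ha hb
    have hc := hs _ (by rw [Walk.support_cons]; exact List.mem_cons_of_mem _ p.start_mem_support)
    have hadj : (G.induce s).Adj ⟨_, ha⟩ ⟨_, hc⟩ := h
    exact hadj.reachable.trans (ih (fun x hx => hs x (by simp [Walk.support_cons, hx])) hc hb)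

private lemma walk_of_reach {V : Type*} {G : SimpleGraph V} {s : Set V} {a b : V}
    {ha : a ∈ s} {hb : b ∈ s} (h : (G.induce s).Reachable ⟨a, ha⟩ ⟨b, hb⟩) :
    ∃ p : G.Walk a b, ∀ x ∈ p.support, x ∈ s := by
  obtain ⟨q⟩ := h
  refine ⟨q.map (SimpleGraph.Embedding.induce s).toHom, ?_⟩
  intro x hx
  erw [Walk.support_map, List.mem_map] at hx
  obtain ⟨y, _, rfl⟩ := hx
  exact y.2

theorem stmt3 {V : Type*} [Fintype V] (G : SimpleGraph V) (S T : Set V) (v : V)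
    (hd : Disjoint S T)
    (hSc : (G.induce S).Connected) (hTc : (G.induce T).Connected)
    (hE : ∀ a ∈ S, ∀ b ∈ T, ¬ G.Adj a b)
    (hv : v ∈ setNbhd G S)
    (hpaths : ∀ b ∈ T, ∀ p : G.Walk v b, ∃ u ∈ p.support, u ∈ setNbhd G S \ {v}) :
    ∀ Z : Set V, IsMinSTSep G S T Z → v ∉ Z := by
  classical
  rintro Z ⟨⟨hdisj, hsep⟩, hmin⟩ hvZ
  apply hmin (Z \ {v}) (Set.sdiff_singleton_ssubset.mpr hvZ)
  constructor
  · exact Set.disjoint_of_subset_left Set.diff_subset hdisj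
  · intro a b ha hb haS hbT hreach
    obtain ⟨p, hp⟩ := walk_of_reach hreach
    -- replace by a path
    have hnd : p.toPath.1.IsPath := p.toPath.2
    have hps : ∀ x ∈ (p.toPath.1 : G.Walk a b).support, x ∈ (Z \ {v})ᶜ :=
      fun x hx => hp x (Walk.support_toPath_subset p hx)
    set p' : G.Walk a b := p.toPath.1 with hp'
    by_cases hvp : v ∈ p'.support
    · -- walk from v to b
      set q : G.Walk v b := p'.dropUntil v hvp with hq
      have hqpath : q.IsPath := hnd.dropUntil hvp
      have hqs : ∀ x ∈ q.support, x ∈ (Z \ {v})ᶜ :=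
        fun x hx => hps x (Walk.support_dropUntil_subset p' hvp hx)
      obtain ⟨u, huq, huN⟩ := hpaths b hbT q
      have huv : u ≠ v := huN.2
      set r : G.Walk u b := q.dropUntil u huq with hr
      -- v not in r.support
      have hvr : v ∉ r.support := by
        intro hvin
        rcases (Walk.mem_support_iff _).mp hvin with h1 | h2
        · exact huv h1.symm
        · have := hqpath.2
          rw [← Walk.take_spec q huq, Walk.support_append, List.nodup_append] at this
          exact this.2.2 _ ((q.takeUntil u huq).start_mem_support) _ h2 rfl
      have hrs : ∀ x ∈ r.support, x ∈ Zᶜ := by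
        intro x hx
        have : x ∈ (Z \ {v})ᶜ := hqs x (Walk.support_dropUntil_subset q huq hx)
        intro hxZ
        exact this ⟨hxZ, fun hxv => hvr (hxv ▸ hx)⟩
      obtain ⟨s, hsS, hsu⟩ := huN.1.2
      have hsZ : s ∈ Zᶜ := fun h => hdisj.le_bot ⟨h, Or.inl hsS⟩
      have hbZ : b ∈ Zᶜ := fun h => hdisj.le_bot ⟨h, Or.inr hbT⟩
      have huZ : u ∈ Zᶜ := hrs u r.start_mem_support
      have hw : ∀ x ∈ (Walk.cons hsu r).support, x ∈ Zᶜ := by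
        intro x hx
        rw [Walk.support_cons, List.mem_cons] at hx
        rcases hx with rfl | hx
        · exact hsZ
        · exact hrs x hx
      exact hsep s b hsZ hbZ hsS hbT (reach_of_walk (Walk.cons hsu r) hw hsZ hbZ)
    · -- v not on the path: support avoids Z
      have haZ : a ∈ Zᶜ := fun h => hdisj.le_bot ⟨h, Or.inl haS⟩
      have hbZ : b ∈ Zᶜ := fun h => hdisj.le_bot ⟨h, Or.inr hbT⟩
      have hps' : ∀ x ∈ p'.support, x ∈ Zᶜ := by
        intro x hx hxZ
        exact hps x hx ⟨hxZ, fun hxv => hvp (hxv ▸ hx)⟩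
      exact hsep a b haZ hbZ haS hbT (reach_of_walk p' hps' haZ hbZ)
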